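/- Let H be a torsion-free monoid (every non-identity element has infinite order, i.e., all powers x, x², x³, ... are pairwise distinct and distinct from 1_H) and let X be a finite subset of H with 1_H ∈ X. If X = A_1 ⋯ A_ℓ for atoms A_1, ..., A_ℓ of P_{fin,1}(H), then ℓ ≤ |X|² − |X|. -/

import Mathlib

open Pointwise

/-- `A` is an atom of the reduced power monoid `P_{fin,1}(H)`. -/
def IsAtomPow1 {H : Type*} [Monoid H] [DecidableEq H] (A : Finset H) : Prop :=
  (1 : H) ∈ A ∧ A ≠ {1} ∧
    ∀ Y Z : Finset H, (1 : H) ∈ Y → (1 : H) ∈ Z → A = Y * Z → Y = {1} ∨ Z = {1}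

theorem length_bound_of_torsion_free {H : Type*} [Monoid H] [DecidableEq H]
    (htf : ∀ x : H, x ≠ 1 → ∀ i j : ℕ, x ^ i = x ^ j → i = j)
    (X : Finset H) (hX : (1 : H) ∈ X)
    (L : List (Finset H)) (hL : ∀ A ∈ L, IsAtomPow1 A) (hprod : L.prod = X) :
    L.length ≤ X.card ^ 2 - X.card := by
  classical
  -- choice of a non-identity element in each atom
  set f : Finset H → H := fun A => if h : ∃ x ∈ A, x ≠ 1 then h.choose else 1 with hf
  have hfA : ∀ A ∈ L, f A ∈ A ∧ f A ≠ 1 := by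
    intro A hA
    obtain ⟨h1, hne, -⟩ := hL A hA
    have hex : ∃ x ∈ A, x ≠ 1 := by
      by_contra hc
      push_neg at hc
      exact hne (Finset.eq_singleton_iff_unique_mem.mpr ⟨h1, fun x hx => hc x hx⟩)
    simp only [hf, dif_pos hex]
    exact ⟨hex.choose_spec.1, hex.choose_spec.2⟩
  -- key lemma: powers up to the count lie in the product
  have key : ∀ (N : List (Finset H)), (∀ A ∈ N, (1 : H) ∈ A ∧ f A ∈ A) →
      ∀ a : H, ∀ j ≤ (N.map f).count a, a ^ j ∈ N.prod := by
    intro N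
    induction N with
    | nil =>
      intro _ a j hj
      simp only [List.map_nil, List.count_nil, Nat.le_zero] at hj
      simp [hj]
    | cons A N ih =>
      intro h a j hj
      have hA1 : (1 : H) ∈ A := (h A List.mem_cons_self).1
      have hAf : f A ∈ A := (h A List.mem_cons_self).2
      have hN : ∀ B ∈ N, (1 : H) ∈ B ∧ f B ∈ B := fun B hB => h B (List.mem_cons_of_mem _ hB)
      simp only [List.map_cons, List.prod_cons]
      simp only [List.map_cons, List.count_cons] at hj
      by_cases hfa : f A = a
      · simp only [hfa, beq_self_eq_true, if_true] at hj
        rcases Nat.lt_or_ge j ((N.map f).count a + 1) with hlt | hge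
        · have : a ^ j = 1 * a ^ j := (one_mul _).symm
          rw [this]
          exact Finset.mul_mem_mul hA1 (ih hN a j (Nat.lt_succ_iff.mp hlt))
        · have hjeq : j = (N.map f).count a + 1 := le_antisymm hj hge
          subst hjeq
          rw [pow_succ']
          exact Finset.mul_mem_mul (hfa ▸ hAf) (ih hN a _ le_rfl)
      · simp only [beq_iff_eq, if_neg hfa] at hj
        have : a ^ j = 1 * a ^ j := (one_mul _).symm
        rw [this]
        exact Finset.mul_mem_mul hA1 (ih hN a j hj)
  have hLmem : ∀ A ∈ L, (1 : H) ∈ A ∧ f A ∈ A := fun A hA => ⟨(hL A hA).1, (hfA A hA).1⟩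
  have keyX : ∀ a : H, ∀ j ≤ (L.map f).count a, a ^ j ∈ X := by
    intro a j hj
    have := key L hLmem a j hj
    rwa [hprod] at this
  set M : List H := L.map f with hM
  -- each count is at most |X| - 1
  have hcount : ∀ a ∈ M.toFinset, M.count a ≤ X.card - 1 := by
    intro a ha
    have haM : a ∈ M := List.mem_toFinset.mp ha
    obtain ⟨A, hAL, rfl⟩ := List.mem_map.mp haM
    have hane : f A ≠ 1 := (hfA A hAL).2
    have hsub : ∀ j ∈ Finset.range (M.count (f A) + 1), (f A) ^ j ∈ X := by
      intro j hj
      exact keyX (f A) j (Nat.lt_succ_iff.mp (Finset.mem_range.mp hj))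
    have hinj : Set.InjOn (fun j => (f A) ^ j) (Finset.range (M.count (f A) + 1)) := by
      intro i _ j _ hij
      exact htf _ hane i j hij
    have hcard := Finset.card_le_card_of_injOn _ hsub hinj
    rw [Finset.card_range] at hcard
    omega
  -- the picks are distinct non-identity elements of X
  have hsubX : M.toFinset ⊆ X.erase 1 := by
    intro a ha
    have haM : a ∈ M := List.mem_toFinset.mp ha
    obtain ⟨A, hAL, rfl⟩ := List.mem_map.mp haM
    have hcnt : 1 ≤ M.count (f A) := Nat.succ_le_of_lt (List.count_pos_iff.mpr haM)
    have h1 : f A ∈ X := by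
      have := keyX (f A) 1 hcnt
      rwa [pow_one] at this
    exact Finset.mem_erase.mpr ⟨(hfA A hAL).2, h1⟩
  have hcardM : M.toFinset.card ≤ X.card - 1 := by
    calc M.toFinset.card ≤ (X.erase 1).card := Finset.card_le_card hsubX
      _ = X.card - 1 := Finset.card_erase_of_mem hX
  -- combine
  have hlen : L.length = M.length := (List.length_map f).symm
  have hsum : ∑ a ∈ M.toFinset, M.count a = M.length := List.sum_toFinset_count_eq_length M
  have hbound : M.length ≤ M.toFinset.card * (X.card - 1) := by
    rw [← hsum]
    have := Finset.sum_le_card_nsmul M.toFinset (fun a => M.count a) (X.card - 1) hcount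
    simpa [smul_eq_mul] using this
  have hfin : L.length ≤ (X.card - 1) * (X.card - 1) := by
    rw [hlen]
    exact hbound.trans (Nat.mul_le_mul_right _ hcardM)
  have hc : 1 ≤ X.card := Finset.card_pos.mpr ⟨1, hX⟩
  obtain ⟨d, hd⟩ : ∃ d, X.card = d + 1 := ⟨X.card - 1, by omega⟩
  rw [hd] at hfin ⊢
  have h2 : (d + 1) ^ 2 = d * d + 2 * d + 1 := by ring
  have h3 : (d + 1 - 1) * (d + 1 - 1) = d * d := by simp
  rw [h3] at hfin
  set e := d * d with he
  omega
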